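/- arXiv:2006.07753 — 5 statements merged into one kernel-verified Lean document; each statement's English description precedes it below -/
import Mathlib

section
/- Chain rule for the logharmonic pre-Schwarzian: if f = h·conj(g) is a sense-preserving logharmonic mapping on a simply connected domain Ω and φ is a locally univalent analytic function whose image lies in Ω, then f∘φ is a sense-preserving logharmonic mapping and P_{f∘φ}(z) = P_f(φ(z))·φ'(z) + Pφ(z), where Pφ = φ''/φ'. -/
open Complex

/-- Second dilatation ω = g'h/(g h') of the logharmonic mapping h·conj g. -/
noncomputable def omegaOf (h g : ℂ → ℂ) (z : ℂ) : ℂ :=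
  deriv g z * h z / (g z * deriv h z)

/-- Pre-Schwarzian derivative of the logharmonic mapping h·conj g. -/
noncomputable def preSch (h g : ℂ → ℂ) (z : ℂ) : ℂ :=
  deriv (deriv h) z / deriv h z + omegaOf h g z * deriv h z / h z -
    deriv (omegaOf h g) z * (starRingEnd ℂ) (omegaOf h g z) /
      (1 - (‖omegaOf h g z‖ : ℂ) ^ 2)

theorem preSch_chain_rule
    (Ω U : Set ℂ) (hΩ : IsOpen Ω) (hU : IsOpen U)
    (hconnΩ : IsPreconnected Ω) (hconnU : IsPreconnected U)
    (h g : ℂ → ℂ)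
    (hh : DifferentiableOn ℂ h Ω) (hg : DifferentiableOn ℂ g Ω)
    (hh0 : ∀ z ∈ Ω, h z ≠ 0) (hg0 : ∀ z ∈ Ω, g z ≠ 0)
    (hh' : ∀ z ∈ Ω, deriv h z ≠ 0)
    (hω : ∀ z ∈ Ω, ‖omegaOf h g z‖ < 1)
    (φ : ℂ → ℂ) (hφ : DifferentiableOn ℂ φ U)
    (hφ' : ∀ z ∈ U, deriv φ z ≠ 0) (hφU : Set.MapsTo φ U Ω) :
    ∀ z ∈ U,
      omegaOf (h ∘ φ) (g ∘ φ) z = omegaOf h g (φ z) ∧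
      ‖omegaOf (h ∘ φ) (g ∘ φ) z‖ < 1 ∧
      preSch (h ∘ φ) (g ∘ φ) z =
        preSch h g (φ z) * deriv φ z + deriv (deriv φ) z / deriv φ z := by
  -- analyticity
  have hhA : AnalyticOnNhd ℂ h Ω := hh.analyticOnNhd hΩ
  have hgA : AnalyticOnNhd ℂ g Ω := hg.analyticOnNhd hΩ
  have hφA : AnalyticOnNhd ℂ φ U := hφ.analyticOnNhd hU
  have hhdA : AnalyticOnNhd ℂ (deriv h) Ω := hhA.deriv
  have hgdA : AnalyticOnNhd ℂ (deriv g) Ω := hgA.deriv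
  have hφdA : AnalyticOnNhd ℂ (deriv φ) U := hφA.deriv
  -- differentiability at points
  have hφd : ∀ w ∈ U, DifferentiableAt ℂ φ w := fun w hw => (hφA w hw).differentiableAt
  have hhd : ∀ w ∈ Ω, DifferentiableAt ℂ h w := fun w hw => (hhA w hw).differentiableAt
  have hgd : ∀ w ∈ Ω, DifferentiableAt ℂ g w := fun w hw => (hgA w hw).differentiableAt
  -- chain rules, valid on all of U
  have keyh : ∀ w ∈ U, deriv (h ∘ φ) w = deriv h (φ w) * deriv φ w := fun w hw =>
    deriv_comp (x := w) (hhd _ (hφU hw)) (hφd w hw)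
  have keyg : ∀ w ∈ U, deriv (g ∘ φ) w = deriv g (φ w) * deriv φ w := fun w hw =>
    deriv_comp (x := w) (hgd _ (hφU hw)) (hφd w hw)
  have keyω : ∀ w ∈ U, omegaOf (h ∘ φ) (g ∘ φ) w = omegaOf h g (φ w) := by
    intro w hw
    have hφw := hφ' w hw
    unfold omegaOf
    rw [keyh w hw, keyg w hw]
    show deriv g (φ w) * deriv φ w * h (φ w) / (g (φ w) * (deriv h (φ w) * deriv φ w))
        = _
    rw [show deriv g (φ w) * deriv φ w * h (φ w)
        = deriv g (φ w) * h (φ w) * deriv φ w by ring,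
      show g (φ w) * (deriv h (φ w) * deriv φ w)
        = g (φ w) * deriv h (φ w) * deriv φ w by ring,
      mul_div_mul_right _ _ hφw]
  intro z hz
  have hzΩ : φ z ∈ Ω := hφU hz
  refine ⟨keyω z hz, by rw [keyω z hz]; exact hω _ hzΩ, ?_⟩
  -- nonvanishing facts at z
  have hφz := hφ' z hz
  have hhz := hh0 _ hzΩ
  have hhz' := hh' _ hzΩ
  have hgz := hg0 _ hzΩ
  have hden : (1 : ℂ) - (‖omegaOf h g (φ z)‖ : ℂ) ^ 2 ≠ 0 := by
    have h1 : (1 : ℝ) - ‖omegaOf h g (φ z)‖ ^ 2 ≠ 0 := by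
      have := hω _ hzΩ
      nlinarith [norm_nonneg (omegaOf h g (φ z))]
    have : ((1 - ‖omegaOf h g (φ z)‖ ^ 2 : ℝ) : ℂ) ≠ 0 := by
      exact_mod_cast h1
    simpa using this
  -- ω is differentiable at φ z
  have hωd : DifferentiableAt ℂ (omegaOf h g) (φ z) := by
    unfold omegaOf
    exact DifferentiableAt.div
      (((hgdA _ hzΩ).differentiableAt).mul (hhd _ hzΩ))
      ((hgd _ hzΩ).mul (hhdA _ hzΩ).differentiableAt)
      (mul_ne_zero hgz hhz')
  -- derivative of ω of the composition
  have hωcomp : deriv (omegaOf (h ∘ φ) (g ∘ φ)) z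
      = deriv (omegaOf h g) (φ z) * deriv φ z := by
    have hev : omegaOf (h ∘ φ) (g ∘ φ) =ᶠ[nhds z] (omegaOf h g ∘ φ) :=
      Filter.eventuallyEq_of_mem (hU.mem_nhds hz) (fun w hw => keyω w hw)
    rw [hev.deriv_eq]
    exact deriv_comp (x := z) hωd (hφd z hz)
  -- second derivative of h ∘ φ
  have hsd : deriv (deriv (h ∘ φ)) z
      = deriv (deriv h) (φ z) * (deriv φ z) ^ 2 + deriv h (φ z) * deriv (deriv φ) z := by
    have hev : deriv (h ∘ φ) =ᶠ[nhds z] (fun w => deriv h (φ w) * deriv φ w) :=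
      Filter.eventuallyEq_of_mem (hU.mem_nhds hz) (fun w hw => keyh w hw)
    rw [hev.deriv_eq]
    have d1 : DifferentiableAt ℂ (fun w => deriv h (φ w)) z :=
      ((hhdA _ hzΩ).differentiableAt).comp z (hφd z hz)
    have d2 : DifferentiableAt ℂ (deriv φ) z := (hφdA z hz).differentiableAt
    rw [deriv_fun_mul d1 d2]
    have : deriv (fun w => deriv h (φ w)) z = deriv (deriv h) (φ z) * deriv φ z :=
      deriv_comp (x := z) (hhdA _ hzΩ).differentiableAt (hφd z hz)
    rw [this]
    ring
  -- finish
  unfold preSch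
  rw [hsd, hωcomp, keyh z hz, keyω z hz]
  simp only [Function.comp_apply]
  field_simp
  ring
end

section
/- Let f = h·conj(g) be a sense-preserving logharmonic mapping with dilatation ω, and let L(z) = z^a·conj(z^b) with a ≠ 0. Then F = L∘f = H·conj(G) with H = h^a g^{conj(b)} and G = g^{conj(a)} h^b is logharmonic, its dilatation is W = (conj(a)/a)·(ω + ε)/(1 + conj(ε)ω) with ε = b/conj(a), and P_F = (a+b−1)·h'/h + conj(a+b−1)·g'/g + P_f. In particular, P_{L∘f} = P_f whenever a + b = 1. -/
open Complex

set_option maxHeartbeats 1000000 in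
lemma key_alg (A A' B B' hv h1 h2 u w c Hv : ℂ)
    (hv0 : hv ≠ 0) (h10 : h1 ≠ 0) (H0 : Hv ≠ 0)
    (hD : A + B' * w ≠ 0) (hD' : A' + B * c ≠ 0)
    (hone : (1 : ℂ) - w * c ≠ 0) (hab : A * A' - B * B' ≠ 0) :
    (((B' * u) * (h1 / hv) + (A + B' * w) * ((h2 * hv - h1 * h1) / hv ^ 2)) * Hv +
        ((A + B' * w) * (h1 / hv)) * (((A + B' * w) * (h1 / hv)) * Hv)) /
      (((A + B' * w) * (h1 / hv)) * Hv) +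
      (A' * w + B) / (A + B' * w) * (((A + B' * w) * (h1 / hv)) * Hv) / Hv -
      ((A' * u) * (A + B' * w) - (A' * w + B) * (B' * u)) / (A + B' * w) ^ 2 *
        ((A * c + B') / (A' + B * c)) /
        (((A * A' - B * B') * (1 - w * c)) / ((A + B' * w) * (A' + B * c))) =
    (A + B - 1) * (h1 / hv) + (A' + B' - 1) * (w * (h1 / hv)) +
      (h2 / h1 + w * h1 / hv - u * c / (1 - w * c)) := by
  have hq : h1 / hv ≠ 0 := div_ne_zero h10 hv0
  have hY : (A + B' * w) * (h1 / hv) ≠ 0 := mul_ne_zero hD hq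
  have t1 : (((B' * u) * (h1 / hv) + (A + B' * w) * ((h2 * hv - h1 * h1) / hv ^ 2)) * Hv +
        ((A + B' * w) * (h1 / hv)) * (((A + B' * w) * (h1 / hv)) * Hv)) /
      (((A + B' * w) * (h1 / hv)) * Hv)
      = B' * u / (A + B' * w) + (h2 / h1 - h1 / hv) + (A + B' * w) * (h1 / hv) := by
    rw [show ((B' * u) * (h1 / hv) + (A + B' * w) * ((h2 * hv - h1 * h1) / hv ^ 2)) * Hv +
        ((A + B' * w) * (h1 / hv)) * (((A + B' * w) * (h1 / hv)) * Hv)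
        = (((B' * u) * (h1 / hv) + (A + B' * w) * ((h2 * hv - h1 * h1) / hv ^ 2)) +
            ((A + B' * w) * (h1 / hv)) * ((A + B' * w) * (h1 / hv))) * Hv from by ring,
      mul_div_mul_right _ _ H0, add_div, mul_div_assoc, div_self hY, mul_one]
    have hX : ((B' * u) * (h1 / hv) + (A + B' * w) * ((h2 * hv - h1 * h1) / hv ^ 2)) /
        ((A + B' * w) * (h1 / hv)) = B' * u / (A + B' * w) + (h2 / h1 - h1 / hv) := by
      rw [div_eq_iff hY]
      field_simp [hD]
    rw [hX]
  have t2 : (A' * w + B) / (A + B' * w) * (((A + B' * w) * (h1 / hv)) * Hv) / Hv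
      = (A' * w + B) * (h1 / hv) := by
    rw [show (A' * w + B) / (A + B' * w) * (((A + B' * w) * (h1 / hv)) * Hv)
        = ((A' * w + B) * ((A + B' * w) / (A + B' * w)) * (h1 / hv)) * Hv from by ring,
      div_self hD, mul_one, mul_div_assoc, div_self H0, mul_one]
  have t3 : ((A' * u) * (A + B' * w) - (A' * w + B) * (B' * u)) / (A + B' * w) ^ 2 *
        ((A * c + B') / (A' + B * c)) /
        (((A * A' - B * B') * (1 - w * c)) / ((A + B' * w) * (A' + B * c)))
      = B' * u / (A + B' * w) + u * c / (1 - w * c) := by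
    have hd1 : (A + B' * w) ^ 2 * (A' + B * c) * ((A * A' - B * B') * (1 - w * c)) ≠ 0 :=
      mul_ne_zero (mul_ne_zero (pow_ne_zero 2 hD) hD') (mul_ne_zero hab hone)
    rw [div_eq_mul_inv _ (((A * A' - B * B') * (1 - w * c)) / _), inv_div,
      div_add_div _ _ hD hone, div_mul_div_comm, div_mul_div_comm,
      div_eq_div_iff hd1 (mul_ne_zero hD hone)]
    ring
  rw [t1, t2, t3]
  ring


set_option maxHeartbeats 1000000 in
theorem preSch_of_affine_logharmonic_composition
    (Ω : Set ℂ) (hΩ : IsOpen Ω) (hconn : IsPreconnected Ω)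
    (hsc : SimplyConnectedSpace Ω)
    (h g : ℂ → ℂ)
    (hh : DifferentiableOn ℂ h Ω) (hg : DifferentiableOn ℂ g Ω)
    (hh0 : ∀ z ∈ Ω, h z ≠ 0) (hg0 : ∀ z ∈ Ω, g z ≠ 0)
    (hh' : ∀ z ∈ Ω, deriv h z ≠ 0)
    (hω : ∀ z ∈ Ω, ‖omegaOf h g z‖ < 1)
    (Lh Lg : ℂ → ℂ)
    (hLh : DifferentiableOn ℂ Lh Ω) (hLg : DifferentiableOn ℂ Lg Ω)
    (hLhlog : ∀ z ∈ Ω, Complex.exp (Lh z) = h z)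
    (hLglog : ∀ z ∈ Ω, Complex.exp (Lg z) = g z)
    (a b : ℂ) (ha : a ≠ 0)
    (ε : ℂ) (hε : ε = b / (starRingEnd ℂ) a)
    (H G : ℂ → ℂ)
    (hH : ∀ z ∈ Ω, H z = Complex.exp (a * Lh z + (starRingEnd ℂ) b * Lg z))
    (hG : ∀ z ∈ Ω, G z = Complex.exp ((starRingEnd ℂ) a * Lg z + b * Lh z))
    (hden : ∀ z ∈ Ω, 1 + (starRingEnd ℂ) ε * omegaOf h g z ≠ 0)
    (hden' : ∀ z ∈ Ω, 1 + ε * omegaOf h g z ≠ 0)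
    (hW : ∀ z ∈ Ω, ‖omegaOf H G z‖ < 1) :
    (∀ z ∈ Ω, omegaOf H G z =
      ((starRingEnd ℂ) a / a) * ((omegaOf h g z + ε) /
        (1 + (starRingEnd ℂ) ε * omegaOf h g z))) ∧
    (∀ z ∈ Ω, preSch H G z =
      (a + b - 1) * (deriv h z / h z) +
        (starRingEnd ℂ) (a + b - 1) * (deriv g z / g z) + preSch h g z) ∧
    (a + b = 1 → ∀ z ∈ Ω, preSch H G z = preSch h g z) := by
  have hmem : ∀ z ∈ Ω, Ω ∈ nhds z := fun z hz => hΩ.mem_nhds hz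
  have hsq : ∀ w : ℂ, ((‖w‖ : ℂ))^2 = w * (starRingEnd ℂ) w := by
    intro w
    rw [← Complex.ofReal_pow, Complex.sq_norm, Complex.mul_conj]
  have hac : (starRingEnd ℂ) a ≠ 0 := by simpa using ha
  have hεc : (starRingEnd ℂ) ε = (starRingEnd ℂ) b / a := by
    rw [hε, map_div₀]; simp
  -- denominator nonvanishing
  have hDne : ∀ z ∈ Ω, a + (starRingEnd ℂ) b * omegaOf h g z ≠ 0 := by
    intro z hz
    have hfac : a + (starRingEnd ℂ) b * omegaOf h g z
        = a * (1 + (starRingEnd ℂ) ε * omegaOf h g z) := by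
      rw [hεc]; field_simp
    rw [hfac]
    exact mul_ne_zero ha (hden z hz)
  -- logarithmic derivatives
  have hLh' : ∀ z ∈ Ω, deriv Lh z = deriv h z / h z := by
    intro z hz
    have hd : DifferentiableAt ℂ Lh z := hLh.differentiableAt (hmem z hz)
    have heq : (fun w => Complex.exp (Lh w)) =ᶠ[nhds z] h :=
      Filter.eventuallyEq_of_mem (hmem z hz) (fun w hw => hLhlog w hw)
    have hde : deriv h z = Complex.exp (Lh z) * deriv Lh z := by
      rw [← heq.deriv_eq, deriv_cexp hd]
    rw [hde, hLhlog z hz]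
    field_simp [hh0 z hz]
  have hLg' : ∀ z ∈ Ω, deriv Lg z = deriv g z / g z := by
    intro z hz
    have hd : DifferentiableAt ℂ Lg z := hLg.differentiableAt (hmem z hz)
    have heq : (fun w => Complex.exp (Lg w)) =ᶠ[nhds z] g :=
      Filter.eventuallyEq_of_mem (hmem z hz) (fun w hw => hLglog w hw)
    have hde : deriv g z = Complex.exp (Lg z) * deriv Lg z := by
      rw [← heq.deriv_eq, deriv_cexp hd]
    rw [hde, hLglog z hz]
    field_simp [hg0 z hz]
  have hH0 : ∀ z ∈ Ω, H z ≠ 0 := by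
    intro z hz; rw [hH z hz]; exact Complex.exp_ne_zero _
  have hG0 : ∀ z ∈ Ω, G z ≠ 0 := by
    intro z hz; rw [hG z hz]; exact Complex.exp_ne_zero _
  -- the quotient g'/g in terms of ω and h'/h
  have hqp : ∀ z ∈ Ω, deriv g z / g z = omegaOf h g z * (deriv h z / h z) := by
    intro z hz
    unfold omegaOf
    field_simp [hh0 z hz, hg0 z hz, hh' z hz, omegaOf]
  -- derivative of H
  have hHd : ∀ z ∈ Ω, deriv H z =
      ((a + (starRingEnd ℂ) b * omegaOf h g z) * (deriv h z / h z)) * H z := by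
    intro z hz
    have hdLh : DifferentiableAt ℂ Lh z := hLh.differentiableAt (hmem z hz)
    have hdLg : DifferentiableAt ℂ Lg z := hLg.differentiableAt (hmem z hz)
    have heq : H =ᶠ[nhds z] (fun w => Complex.exp (a * Lh w + (starRingEnd ℂ) b * Lg w)) :=
      Filter.eventuallyEq_of_mem (hmem z hz) (fun w hw => hH w hw)
    have hdin : DifferentiableAt ℂ (fun w => a * Lh w + (starRingEnd ℂ) b * Lg w) z :=
      ((hdLh.const_mul a).add (hdLg.const_mul ((starRingEnd ℂ) b)))
    have hstep : deriv H z = Complex.exp (a * Lh z + (starRingEnd ℂ) b * Lg z) *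
        (a * deriv Lh z + (starRingEnd ℂ) b * deriv Lg z) := by
      rw [heq.deriv_eq, deriv_cexp hdin, deriv_fun_add (hdLh.const_mul a) (hdLg.const_mul _),
        deriv_const_mul _ hdLh, deriv_const_mul _ hdLg]
    rw [hstep, ← hH z hz, hLh' z hz, hLg' z hz]
    unfold omegaOf
    field_simp [hh0 z hz, hg0 z hz, hh' z hz]
  -- derivative of G
  have hGd : ∀ z ∈ Ω, deriv G z =
      (((starRingEnd ℂ) a * omegaOf h g z + b) * (deriv h z / h z)) * G z := by
    intro z hz
    have hdLh : DifferentiableAt ℂ Lh z := hLh.differentiableAt (hmem z hz)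
    have hdLg : DifferentiableAt ℂ Lg z := hLg.differentiableAt (hmem z hz)
    have heq : G =ᶠ[nhds z] (fun w => Complex.exp ((starRingEnd ℂ) a * Lg w + b * Lh w)) :=
      Filter.eventuallyEq_of_mem (hmem z hz) (fun w hw => hG w hw)
    have hdin : DifferentiableAt ℂ (fun w => (starRingEnd ℂ) a * Lg w + b * Lh w) z :=
      ((hdLg.const_mul ((starRingEnd ℂ) a)).add (hdLh.const_mul b))
    have hstep : deriv G z = Complex.exp ((starRingEnd ℂ) a * Lg z + b * Lh z) *
        ((starRingEnd ℂ) a * deriv Lg z + b * deriv Lh z) := by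
      rw [heq.deriv_eq, deriv_cexp hdin, deriv_fun_add (hdLg.const_mul _) (hdLh.const_mul b),
        deriv_const_mul _ hdLg, deriv_const_mul _ hdLh]
    rw [hstep, ← hG z hz, hLh' z hz, hLg' z hz]
    unfold omegaOf
    field_simp [hh0 z hz, hg0 z hz, hh' z hz]
  -- the dilatation of the composition
  have hWf : ∀ z ∈ Ω, omegaOf H G z =
      ((starRingEnd ℂ) a * omegaOf h g z + b) /
        (a + (starRingEnd ℂ) b * omegaOf h g z) := by
    intro z hz
    show deriv G z * H z / (G z * deriv H z) = _
    rw [hGd z hz, hHd z hz]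
    have hph : deriv h z / h z ≠ 0 := div_ne_zero (hh' z hz) (hh0 z hz)
    rw [div_eq_div_iff (mul_ne_zero (hG0 z hz)
      (mul_ne_zero (mul_ne_zero (hDne z hz) hph) (hH0 z hz))) (hDne z hz)]
    ring
  have main2 : ∀ z ∈ Ω, preSch H G z =
      (a + b - 1) * (deriv h z / h z) +
        (starRingEnd ℂ) (a + b - 1) * (deriv g z / g z) + preSch h g z := by
    intro z hz
    have hΩz := hmem z hz
    have hdh : DifferentiableAt ℂ h z := hh.differentiableAt hΩz
    have hdg : DifferentiableAt ℂ g z := hg.differentiableAt hΩz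
    have hdh' : DifferentiableAt ℂ (deriv h) z :=
      ((hh.analyticOnNhd hΩ).deriv z hz).differentiableAt
    have hdg' : DifferentiableAt ℂ (deriv g) z :=
      ((hg.analyticOnNhd hΩ).deriv z hz).differentiableAt
    have hωdiff : DifferentiableAt ℂ (omegaOf h g) z := by
      unfold omegaOf
      exact (hdg'.mul hdh).div (hdg.mul hdh') (mul_ne_zero (hg0 z hz) (hh' z hz))
    have hph : DifferentiableAt ℂ (fun w => deriv h w / h w) z := hdh'.div hdh (hh0 z hz)
    have hdH : DifferentiableAt ℂ H z := by
      have heq : H =ᶠ[nhds z] (fun w => Complex.exp (a * Lh w + (starRingEnd ℂ) b * Lg w)) :=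
        Filter.eventuallyEq_of_mem hΩz (fun w hw => hH w hw)
      rw [Filter.EventuallyEq.differentiableAt_iff heq]
      exact (((hLh.differentiableAt hΩz).const_mul a).add
        ((hLg.differentiableAt hΩz).const_mul _)).cexp
    have hDz := hDne z hz
    have hD'z : (starRingEnd ℂ) a + b * (starRingEnd ℂ) (omegaOf h g z) ≠ 0 := by
      intro hcon
      apply hDz
      have h2 := congrArg (starRingEnd ℂ) hcon
      simpa [map_add, map_mul] using h2
    -- derivative of the new dilatation
    have hWd : deriv (omegaOf H G) z =
        (((starRingEnd ℂ) a * deriv (omegaOf h g) z) *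
            (a + (starRingEnd ℂ) b * omegaOf h g z) -
          ((starRingEnd ℂ) a * omegaOf h g z + b) *
            ((starRingEnd ℂ) b * deriv (omegaOf h g) z)) /
          (a + (starRingEnd ℂ) b * omegaOf h g z) ^ 2 := by
      have heq : omegaOf H G =ᶠ[nhds z]
          (fun w => ((starRingEnd ℂ) a * omegaOf h g w + b) /
            (a + (starRingEnd ℂ) b * omegaOf h g w)) :=
        Filter.eventuallyEq_of_mem hΩz (fun w hw => hWf w hw)
      rw [heq.deriv_eq, deriv_fun_div ((hωdiff.const_mul _).add_const b)
        ((hωdiff.const_mul _).const_add a) hDz,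
        deriv_add_const, deriv_const_add, deriv_const_mul _ hωdiff,
        deriv_const_mul _ hωdiff]
    -- second derivative of H
    have hd2H : deriv (deriv H) z =
        (((starRingEnd ℂ) b * deriv (omegaOf h g) z) * (deriv h z / h z) +
            (a + (starRingEnd ℂ) b * omegaOf h g z) *
              ((deriv (deriv h) z * h z - deriv h z * deriv h z) / h z ^ 2)) * H z +
          ((a + (starRingEnd ℂ) b * omegaOf h g z) * (deriv h z / h z)) *
            (((a + (starRingEnd ℂ) b * omegaOf h g z) * (deriv h z / h z)) * H z) := by
      have heq : deriv H =ᶠ[nhds z]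
          (fun w => ((a + (starRingEnd ℂ) b * omegaOf h g w) * (deriv h w / h w)) * H w) :=
        Filter.eventuallyEq_of_mem hΩz (fun w hw => hHd w hw)
      have hlin : DifferentiableAt ℂ (fun w => a + (starRingEnd ℂ) b * omegaOf h g w) z :=
        (hωdiff.const_mul _).const_add a
      rw [heq.deriv_eq, deriv_fun_mul (hlin.fun_mul hph) hdH, deriv_fun_mul hlin hph,
        deriv_const_add, deriv_const_mul _ hωdiff, deriv_fun_div hdh' hdh (hh0 z hz),
        hHd z hz]
    -- nonvanishing of 1 - |ω|² and 1 - |W|²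
    have honeω : (1 : ℂ) - omegaOf h g z * (starRingEnd ℂ) (omegaOf h g z) ≠ 0 := by
      rw [← hsq, show (1 : ℂ) - (‖omegaOf h g z‖ : ℂ) ^ 2
          = ((1 - ‖omegaOf h g z‖ ^ 2 : ℝ) : ℂ) by push_cast; ring,
        Complex.ofReal_ne_zero]
      have := hω z hz
      nlinarith [norm_nonneg (omegaOf h g z)]
    have honeW : (1 : ℂ) - (‖omegaOf H G z‖ : ℂ) ^ 2 ≠ 0 := by
      rw [show (1 : ℂ) - (‖omegaOf H G z‖ : ℂ) ^ 2
          = ((1 - ‖omegaOf H G z‖ ^ 2 : ℝ) : ℂ) by push_cast; ring,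
        Complex.ofReal_ne_zero]
      have := hW z hz
      nlinarith [norm_nonneg (omegaOf H G z)]
    -- key factorisation of 1 - W conj W
    have hNW : (1 : ℂ) - ((starRingEnd ℂ) a * omegaOf h g z + b) /
          (a + (starRingEnd ℂ) b * omegaOf h g z) *
          ((a * (starRingEnd ℂ) (omegaOf h g z) + (starRingEnd ℂ) b) /
            ((starRingEnd ℂ) a + b * (starRingEnd ℂ) (omegaOf h g z))) =
        ((a * (starRingEnd ℂ) a - b * (starRingEnd ℂ) b) *
            (1 - omegaOf h g z * (starRingEnd ℂ) (omegaOf h g z))) /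
          ((a + (starRingEnd ℂ) b * omegaOf h g z) *
            ((starRingEnd ℂ) a + b * (starRingEnd ℂ) (omegaOf h g z))) := by
      rw [div_mul_div_comm, one_sub_div (mul_ne_zero hDz hD'z)]
      congr 1
      ring
    have hab : a * (starRingEnd ℂ) a - b * (starRingEnd ℂ) b ≠ 0 := by
      have h1 := honeW
      rw [hsq, hWf z hz, map_div₀, map_add, map_add, map_mul, map_mul,
        Complex.conj_conj, Complex.conj_conj, hNW] at h1
      intro hcon
      apply h1
      rw [hcon, zero_mul, zero_div]
    -- assemble everything
    simp only [preSch]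
    rw [hsq (omegaOf H G z), hsq (omegaOf h g z), hWf z hz, hWd, hd2H, hHd z hz,
      hqp z hz, map_div₀, map_add, map_add, map_mul, map_mul,
      Complex.conj_conj, Complex.conj_conj, hNW, map_sub, map_add, map_one]
    exact key_alg a ((starRingEnd ℂ) a) b ((starRingEnd ℂ) b) (h z) (deriv h z)
      (deriv (deriv h) z) (deriv (omegaOf h g) z) (omegaOf h g z)
      ((starRingEnd ℂ) (omegaOf h g z)) (H z) (hh0 z hz) (hh' z hz) (hH0 z hz)
      hDz hD'z honeω hab
  refine ⟨?_, main2, ?_⟩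
  · intro z hz
    rw [hWf z hz, hεc, hε]
    have e1 : (1 : ℂ) + (starRingEnd ℂ) b / a * omegaOf h g z
        = (a + (starRingEnd ℂ) b * omegaOf h g z) / a := by
      field_simp
    have e2 : omegaOf h g z + b / (starRingEnd ℂ) a
        = ((starRingEnd ℂ) a * omegaOf h g z + b) / (starRingEnd ℂ) a := by
      field_simp
    rw [e1, e2, div_div_div_comm]
    rw [eq_comm, mul_comm]
    exact div_mul_cancel₀ _ (div_ne_zero hac ha)
  · intro hab1 z hz
    rw [main2 z hz, hab1]
    simp
end

section
/- Dilatation transformation under logharmonic affine maps: with f = h·conj(g) of dilatation ω, L(z) = z^a conj(z^b), a ≠ 0, ε = b/conj(a), the logharmonic mapping F = L∘f has dilatation W = (conj(a)/a)·(ω + ε)/(1 + conj(ε)·ω). In particular |W| < 1 on the set where |ω| < 1, provided |ε| < 1. -/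
open Complex

lemma deriv_of_exp_rep {Ω : Set ℂ} (hΩ : IsOpen Ω) {f L : ℂ → ℂ}
    (hL : DifferentiableOn ℂ L Ω) (hrep : ∀ z ∈ Ω, Complex.exp (L z) = f z)
    {z : ℂ} (hz : z ∈ Ω) : deriv f z = f z * deriv L z := by
  have hLd : DifferentiableAt ℂ L z := hL.differentiableAt (hΩ.mem_nhds hz)
  have heq : f =ᶠ[nhds z] fun w => Complex.exp (L w) := by
    filter_upwards [hΩ.mem_nhds hz] with w hw using (hrep w hw).symm
  rw [Filter.EventuallyEq.deriv_eq heq, (hLd.hasDerivAt.cexp).deriv, hrep z hz]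

lemma mobius_algebra (a b p q : ℂ) (ha : a ≠ 0) (ha' : (starRingEnd ℂ) a ≠ 0)
    (hp : p ≠ 0) :
    ((starRingEnd ℂ) a * q + b * p) / (a * p + (starRingEnd ℂ) b * q) =
      ((starRingEnd ℂ) a / a) * ((q / p + b / (starRingEnd ℂ) a) /
        (1 + ((starRingEnd ℂ) b / a) * (q / p))) := by
  by_cases hd : a * p + (starRingEnd ℂ) b * q = 0
  · have hE : 1 + (starRingEnd ℂ) b / a * (q / p) = 0 := by
      field_simp
      linear_combination hd
    rw [hd, hE, div_zero, div_zero, mul_zero]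
  · have hE : 1 + (starRingEnd ℂ) b / a * (q / p) ≠ 0 := by
      intro h0
      apply hd
      field_simp at h0
      linear_combination h0
    field_simp

theorem dilatation_of_affine_logharmonic_composition
    (Ω : Set ℂ) (hΩ : IsOpen Ω) (hconn : IsPreconnected Ω)
    (hsc : SimplyConnectedSpace Ω)
    (h g : ℂ → ℂ)
    (hh : DifferentiableOn ℂ h Ω) (hg : DifferentiableOn ℂ g Ω)
    (hh0 : ∀ z ∈ Ω, h z ≠ 0) (hg0 : ∀ z ∈ Ω, g z ≠ 0)
    (hh' : ∀ z ∈ Ω, deriv h z ≠ 0)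
    (Lh Lg : ℂ → ℂ)
    (hLh : DifferentiableOn ℂ Lh Ω) (hLg : DifferentiableOn ℂ Lg Ω)
    (hLhlog : ∀ z ∈ Ω, Complex.exp (Lh z) = h z)
    (hLglog : ∀ z ∈ Ω, Complex.exp (Lg z) = g z)
    (a b : ℂ) (ha : a ≠ 0)
    (ε : ℂ) (hε : ε = b / (starRingEnd ℂ) a)
    (H G : ℂ → ℂ)
    (hH : ∀ z ∈ Ω, H z = Complex.exp (a * Lh z + (starRingEnd ℂ) b * Lg z))
    (hG : ∀ z ∈ Ω, G z = Complex.exp ((starRingEnd ℂ) a * Lg z + b * Lh z))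
    (hden' : ∀ z ∈ Ω, 1 + ε * omegaOf h g z ≠ 0) :
    (∀ z ∈ Ω, omegaOf H G z =
      ((starRingEnd ℂ) a / a) * ((omegaOf h g z + ε) /
        (1 + (starRingEnd ℂ) ε * omegaOf h g z))) ∧
    (‖ε‖ < 1 → ∀ z ∈ Ω, ‖omegaOf h g z‖ < 1 → ‖omegaOf H G z‖ < 1) := by
  have ha' : (starRingEnd ℂ) a ≠ 0 := by simpa using ha
  have hεconj : (starRingEnd ℂ) ε = (starRingEnd ℂ) b / a := by
    rw [hε, map_div₀, Complex.conj_conj]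
  have main : ∀ z ∈ Ω, omegaOf H G z =
      ((starRingEnd ℂ) a / a) * ((omegaOf h g z + ε) /
        (1 + (starRingEnd ℂ) ε * omegaOf h g z)) := by
    intro z hz
    set p := deriv Lh z with hp_def
    set q := deriv Lg z with hq_def
    have hhz : h z ≠ 0 := hh0 z hz
    have hgz : g z ≠ 0 := hg0 z hz
    have dh : deriv h z = h z * p := deriv_of_exp_rep hΩ hLh hLhlog hz
    have dg : deriv g z = g z * q := deriv_of_exp_rep hΩ hLg hLglog hz
    have hp : p ≠ 0 := by
      intro h0
      apply hh' z hz
      rw [dh, h0, mul_zero]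
    -- omega = q / p
    have hω : omegaOf h g z = q / p := by
      rw [omegaOf, dh, dg]
      field_simp
    -- derivatives of H and G
    have hLhd : DifferentiableAt ℂ Lh z := hLh.differentiableAt (hΩ.mem_nhds hz)
    have hLgd : DifferentiableAt ℂ Lg z := hLg.differentiableAt (hΩ.mem_nhds hz)
    have hMd : DifferentiableOn ℂ (fun w => a * Lh w + (starRingEnd ℂ) b * Lg w) Ω :=
      (hLh.const_mul a).add (hLg.const_mul _)
    have hNd : DifferentiableOn ℂ (fun w => (starRingEnd ℂ) a * Lg w + b * Lh w) Ω :=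
      (hLg.const_mul _).add (hLh.const_mul b)
    have dM : deriv (fun w => a * Lh w + (starRingEnd ℂ) b * Lg w) z
        = a * p + (starRingEnd ℂ) b * q :=
      ((hLhd.hasDerivAt.const_mul a).add (hLgd.hasDerivAt.const_mul _)).deriv
    have dN : deriv (fun w => (starRingEnd ℂ) a * Lg w + b * Lh w) z
        = (starRingEnd ℂ) a * q + b * p :=
      ((hLgd.hasDerivAt.const_mul _).add (hLhd.hasDerivAt.const_mul b)).deriv
    have dH : deriv H z = H z * (a * p + (starRingEnd ℂ) b * q) := by
      rw [deriv_of_exp_rep hΩ hMd (fun w hw => (hH w hw).symm) hz, dM]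
    have dG : deriv G z = G z * ((starRingEnd ℂ) a * q + b * p) := by
      rw [deriv_of_exp_rep hΩ hNd (fun w hw => (hG w hw).symm) hz, dN]
    have hHz : H z ≠ 0 := by rw [hH z hz]; exact Complex.exp_ne_zero _
    have hGz : G z ≠ 0 := by rw [hG z hz]; exact Complex.exp_ne_zero _
    have hWeq : omegaOf H G z =
        ((starRingEnd ℂ) a * q + b * p) / (a * p + (starRingEnd ℂ) b * q) := by
      rw [omegaOf, dG, dH,
        show G z * ((starRingEnd ℂ) a * q + b * p) * H z
          = (G z * H z) * ((starRingEnd ℂ) a * q + b * p) by ring,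
        show G z * (H z * (a * p + (starRingEnd ℂ) b * q))
          = (G z * H z) * (a * p + (starRingEnd ℂ) b * q) by ring,
        mul_div_mul_left _ _ (mul_ne_zero hGz hHz)]
    rw [hWeq, hω, hεconj, hε]
    exact mobius_algebra a b p q ha ha' hp
  refine ⟨main, ?_⟩
  intro hε1 z hz hω1
  set w := omegaOf h g z with hw_def
  have hεsq : Complex.normSq ε < 1 := by
    have : Complex.normSq ε = ‖ε‖ ^ 2 := by
      rw [← Complex.sq_norm]
    rw [this]; nlinarith [norm_nonneg ε]
  have hωsq : Complex.normSq w < 1 := by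
    have : Complex.normSq w = ‖w‖ ^ 2 := by
      rw [← Complex.sq_norm]
    rw [this]; nlinarith [norm_nonneg w]
  have key : Complex.normSq (1 + (starRingEnd ℂ) ε * w) - Complex.normSq (w + ε)
      = (1 - Complex.normSq ε) * (1 - Complex.normSq w) := by
    simp only [Complex.normSq_apply, Complex.add_re, Complex.add_im, Complex.mul_re,
      Complex.mul_im, Complex.conj_re, Complex.conj_im, Complex.one_re, Complex.one_im]
    ring
  have hlt : Complex.normSq (w + ε) < Complex.normSq (1 + (starRingEnd ℂ) ε * w) := by
    nlinarith
  have hnormlt : ‖w + ε‖ < ‖1 + (starRingEnd ℂ) ε * w‖ := by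
    rw [Complex.norm_def, Complex.norm_def]
    exact Real.sqrt_lt_sqrt (Complex.normSq_nonneg _) hlt
  have hdenpos : 0 < ‖1 + (starRingEnd ℂ) ε * w‖ := lt_of_le_of_lt (norm_nonneg _) hnormlt
  rw [main z hz, norm_mul, norm_div, norm_div, RCLike.norm_conj, div_self (norm_ne_zero_iff.mpr ha),
    one_mul]
  rw [div_lt_one hdenpos]
  exact hnormlt
end

section
/- Let ω_f and ω_F be analytic self-maps of the unit disk with ω_f(0) = ω_F(0) = 0 and ω_f'(0) ≠ 0, satisfying |ω_f'(z)|²/(1−|ω_f(z)|²)² = |ω_F'(z)|²/(1−|ω_F(z)|²)² for all z ∈ 𝔻. Then there exists λ with |λ| = 1 such that ω_F = λ·ω_f on 𝔻. -/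
open Complex Topology Filter

private lemma hasDerivAt_conj_conj {f : ℂ → ℂ} {c z : ℂ}
    (h : HasDerivAt f c ((starRingEnd ℂ) z)) :
    HasDerivAt (fun w => (starRingEnd ℂ) (f ((starRingEnd ℂ) w))) ((starRingEnd ℂ) c) z := by
  rw [hasDerivAt_iff_tendsto_slope] at h ⊢
  have hmap : Filter.Tendsto (starRingEnd ℂ) (𝓝[≠] z) (𝓝[≠] ((starRingEnd ℂ) z)) := by
    apply Filter.Tendsto.inf
    · exact (Complex.continuous_conj.tendsto z)
    · rw [Filter.tendsto_principal_principal]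
      intro w hw
      simp only [Set.mem_compl_iff, Set.mem_singleton_iff] at hw ⊢
      exact fun hc => hw (by simpa using congrArg (starRingEnd ℂ) hc)
  have h2 := (Complex.continuous_conj.tendsto c).comp (h.comp hmap)
  refine h2.congr fun w => ?_
  simp only [Function.comp_apply, slope_def_field, map_div₀, map_sub, Complex.conj_conj]

private lemma differentiableAt_conj_conj {f : ℂ → ℂ} {z : ℂ}
    (h : DifferentiableAt ℂ f ((starRingEnd ℂ) z)) :
    DifferentiableAt ℂ (fun w => (starRingEnd ℂ) (f ((starRingEnd ℂ) w))) z :=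
  (hasDerivAt_conj_conj h.hasDerivAt).differentiableAt

private lemma freq_zeros (g : ℂ → ℂ) (hg : ∀ s : ℝ, |s| < 1/2 → g s = 0) :
    ∃ᶠ x in nhdsWithin (0:ℂ) {(0:ℂ)}ᶜ, g x = 0 := by
  have h1 : Filter.Tendsto (fun n : ℕ => (((n:ℝ)+3)⁻¹ : ℝ)) Filter.atTop (nhds 0) := by
    apply Filter.Tendsto.inv_tendsto_atTop
    exact Filter.tendsto_atTop_add_const_right _ 3 tendsto_natCast_atTop_atTop
  have h2 : Filter.Tendsto (fun n : ℕ => ((((n:ℝ)+3)⁻¹ : ℝ) : ℂ)) Filter.atTop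
      (nhdsWithin (0:ℂ) {(0:ℂ)}ᶜ) := by
    apply tendsto_nhdsWithin_of_tendsto_nhds_of_eventually_within
    · have h0 : ((0:ℝ):ℂ) = 0 := Complex.ofReal_zero
      exact h0 ▸ ((Complex.continuous_ofReal.tendsto 0).comp h1)
    · apply Filter.Eventually.of_forall
      intro n
      simp only [Set.mem_compl_iff, Set.mem_singleton_iff, Complex.ofReal_eq_zero]
      positivity
  apply h2.frequently
  apply Filter.Frequently.of_forall
  intro n
  apply hg
  have hpos : (0:ℝ) < (n:ℝ) + 3 := by positivity
  have habs : |(((n:ℝ)+3)⁻¹ : ℝ)| = ((n:ℝ)+3)⁻¹ := abs_of_nonneg (by positivity)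
  rw [habs]
  have h3 : ((n:ℝ)+3)⁻¹ ≤ 3⁻¹ := by
    apply inv_anti₀
    · norm_num
    · linarith [Nat.cast_nonneg (α := ℝ) n]
  linarith

theorem dilatation_rotation_of_equal_hyperbolic_derivative
    (ωf ωF : ℂ → ℂ)
    (hωf : DifferentiableOn ℂ ωf (Metric.ball (0 : ℂ) 1))
    (hωF : DifferentiableOn ℂ ωF (Metric.ball (0 : ℂ) 1))
    (hmapf : Set.MapsTo ωf (Metric.ball (0 : ℂ) 1) (Metric.ball (0 : ℂ) 1))
    (hmapF : Set.MapsTo ωF (Metric.ball (0 : ℂ) 1) (Metric.ball (0 : ℂ) 1))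
    (h0f : ωf 0 = 0) (h0F : ωF 0 = 0) (h'f : deriv ωf 0 ≠ 0)
    (heq : ∀ z ∈ Metric.ball (0 : ℂ) 1,
      ‖deriv ωf z‖ ^ 2 / (1 - ‖ωf z‖ ^ 2) ^ 2 =
      ‖deriv ωF z‖ ^ 2 / (1 - ‖ωF z‖ ^ 2) ^ 2) :
    ∃ lam : ℂ, ‖lam‖ = 1 ∧ ∀ z ∈ Metric.ball (0 : ℂ) 1, ωF z = lam * ωf z := by
  have hD : IsOpen (Metric.ball (0:ℂ) 1) := Metric.isOpen_ball
  have h0mem : (0:ℂ) ∈ Metric.ball (0:ℂ) 1 := by simp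
  have hAf : AnalyticOnNhd ℂ ωf (Metric.ball (0:ℂ) 1) := hωf.analyticOnNhd hD
  have hAF : AnalyticOnNhd ℂ ωF (Metric.ball (0:ℂ) 1) := hωF.analyticOnNhd hD
  have hdf : DifferentiableOn ℂ (deriv ωf) (Metric.ball (0:ℂ) 1) :=
    fun z hz => ((hAf.deriv) z hz).differentiableAt.differentiableWithinAt
  have hdF : DifferentiableOn ℂ (deriv ωF) (Metric.ball (0:ℂ) 1) :=
    fun z hz => ((hAF.deriv) z hz).differentiableAt.differentiableWithinAt
  -- conj-reflected functions are differentiable on the ball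
  have hstar : ∀ (f : ℂ → ℂ), DifferentiableOn ℂ f (Metric.ball (0:ℂ) 1) →
      DifferentiableOn ℂ (fun w => (starRingEnd ℂ) (f ((starRingEnd ℂ) w)))
        (Metric.ball (0:ℂ) 1) := by
    intro f hf w hw
    have hw' : (starRingEnd ℂ) w ∈ Metric.ball (0:ℂ) 1 := by
      rw [mem_ball_zero_iff] at hw ⊢
      simpa using hw
    exact (differentiableAt_conj_conj (hf.differentiableAt (hD.mem_nhds hw'))).differentiableWithinAt
  -- the polarized function
  set P : ℂ → ℂ → ℂ := fun z w =>
    deriv ωf z * (starRingEnd ℂ) (deriv ωf ((starRingEnd ℂ) w)) *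
      (1 - ωF z * (starRingEnd ℂ) (ωF ((starRingEnd ℂ) w)))^2
    - deriv ωF z * (starRingEnd ℂ) (deriv ωF ((starRingEnd ℂ) w)) *
      (1 - ωf z * (starRingEnd ℂ) (ωf ((starRingEnd ℂ) w)))^2 with hPdef
  -- vanishing on the antidiagonal
  have hanti : ∀ z ∈ Metric.ball (0:ℂ) 1, P z ((starRingEnd ℂ) z) = 0 := by
    intro z hz
    have h1 : ‖ωf z‖ < 1 := mem_ball_zero_iff.mp (hmapf hz)
    have h2 : ‖ωF z‖ < 1 := mem_ball_zero_iff.mp (hmapF hz)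
    have h1' : (0:ℝ) < 1 - ‖ωf z‖^2 := by nlinarith [norm_nonneg (ωf z)]
    have h2' : (0:ℝ) < 1 - ‖ωF z‖^2 := by nlinarith [norm_nonneg (ωF z)]
    have hcross : ‖deriv ωf z‖^2 * (1-‖ωF z‖^2)^2 = ‖deriv ωF z‖^2 * (1-‖ωf z‖^2)^2 := by
      have h := heq z hz
      rw [div_eq_div_iff (by positivity) (by positivity)] at h
      exact h
    have key : ∀ u : ℂ, u * (starRingEnd ℂ) u = ((‖u‖^2 : ℝ) : ℂ) := by
      intro u
      rw [Complex.mul_conj]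
      norm_cast
      rw [Complex.normSq_eq_norm_sq]
    simp only [hPdef, Complex.conj_conj]
    rw [key, key, key, key]
    rw [sub_eq_zero]
    push_cast
    exact_mod_cast congrArg (fun r : ℝ => (r : ℂ)) hcross
  -- differentiability of slices
  have hcomp : ∀ (e₁ e₂ : ℂ → ℂ) (s : Set ℂ), Differentiable ℂ e₁ → Differentiable ℂ e₂ →
      Set.MapsTo e₁ s (Metric.ball (0:ℂ) 1) → Set.MapsTo e₂ s (Metric.ball (0:ℂ) 1) →
      DifferentiableOn ℂ (fun x => P (e₁ x) (e₂ x)) s := by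
    intro e₁ e₂ s he₁ he₂ hm1 hm2
    have d1 : DifferentiableOn ℂ (fun x => deriv ωf (e₁ x)) s :=
      hdf.comp he₁.differentiableOn hm1
    have d1' : DifferentiableOn ℂ (fun x => deriv ωF (e₁ x)) s :=
      hdF.comp he₁.differentiableOn hm1
    have d2 : DifferentiableOn ℂ
        (fun x => (starRingEnd ℂ) (deriv ωf ((starRingEnd ℂ) (e₂ x)))) s :=
      (hstar _ hdf).comp he₂.differentiableOn hm2
    have d2' : DifferentiableOn ℂ
        (fun x => (starRingEnd ℂ) (deriv ωF ((starRingEnd ℂ) (e₂ x)))) s :=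
      (hstar _ hdF).comp he₂.differentiableOn hm2
    have d3 : DifferentiableOn ℂ (fun x => ωf (e₁ x)) s :=
      hωf.comp he₁.differentiableOn hm1
    have d3' : DifferentiableOn ℂ (fun x => ωF (e₁ x)) s :=
      hωF.comp he₁.differentiableOn hm1
    have d4 : DifferentiableOn ℂ
        (fun x => (starRingEnd ℂ) (ωf ((starRingEnd ℂ) (e₂ x)))) s :=
      (hstar _ hωf).comp he₂.differentiableOn hm2
    have d4' : DifferentiableOn ℂ
        (fun x => (starRingEnd ℂ) (ωF ((starRingEnd ℂ) (e₂ x)))) s :=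
      (hstar _ hωF).comp he₂.differentiableOn hm2
    exact ((d1.mul d2).mul (((differentiableOn_const 1).sub (d3'.mul d4')).pow 2)).sub
      ((d1'.mul d2').mul (((differentiableOn_const 1).sub (d3.mul d4)).pow 2))
  have hmem : ∀ x y : ℂ, x ∈ Metric.ball (0:ℂ) (1/2) → y ∈ Metric.ball (0:ℂ) (1/2) →
      x + I*y ∈ Metric.ball (0:ℂ) 1 ∧ x - I*y ∈ Metric.ball (0:ℂ) 1 := by
    intro x y hx hy
    rw [mem_ball_zero_iff] at hx hy
    constructor <;> rw [mem_ball_zero_iff]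
    · calc ‖x + I*y‖ ≤ ‖x‖ + ‖I*y‖ := norm_add_le _ _
        _ = ‖x‖ + ‖y‖ := by rw [norm_mul, Complex.norm_I, one_mul]
        _ < 1 := by linarith
    · calc ‖x - I*y‖ ≤ ‖x‖ + ‖I*y‖ := norm_sub_le _ _
        _ = ‖x‖ + ‖y‖ := by rw [norm_mul, Complex.norm_I, one_mul]
        _ < 1 := by linarith
  have hhalf : (0:ℂ) ∈ Metric.ball (0:ℂ) (1/2) := by
    rw [mem_ball_zero_iff]; norm_num
  -- Step A: vanishing for complex x, real y
  have stepA : ∀ t : ℝ, |t| < 1/2 → ∀ x ∈ Metric.ball (0:ℂ) (1/2),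
      P (x + I*(t:ℂ)) (x - I*(t:ℂ)) = 0 := by
    intro t ht
    have htmem : ((t:ℂ)) ∈ Metric.ball (0:ℂ) (1/2) := by
      rw [mem_ball_zero_iff]; simpa using ht
    have hdiff : DifferentiableOn ℂ (fun x => P (x + I*(t:ℂ)) (x - I*(t:ℂ)))
        (Metric.ball (0:ℂ) (1/2)) := by
      apply hcomp
      · exact differentiable_id.add_const _
      · exact differentiable_id.sub_const _
      · exact fun x hx => (hmem x t hx htmem).1
      · exact fun x hx => (hmem x t hx htmem).2
    have hzeros : ∀ s : ℝ, |s| < 1/2 →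
        (fun x => P (x + I*(t:ℂ)) (x - I*(t:ℂ))) (s:ℂ) = 0 := by
      intro s hs
      have hsmem : ((s:ℂ)) ∈ Metric.ball (0:ℂ) (1/2) := by
        rw [mem_ball_zero_iff]; simpa using hs
      have hzmem : (s:ℂ) + I*(t:ℂ) ∈ Metric.ball (0:ℂ) 1 := (hmem _ _ hsmem htmem).1
      have hconj : (starRingEnd ℂ) ((s:ℂ) + I*(t:ℂ)) = (s:ℂ) - I*(t:ℂ) := by
        simp [map_add, map_mul, Complex.conj_I, Complex.conj_ofReal]
        ring
      have := hanti _ hzmem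
      rw [hconj] at this
      exact this
    have hfreq := freq_zeros (fun x => P (x + I*(t:ℂ)) (x - I*(t:ℂ))) hzeros
    have := (hdiff.analyticOnNhd Metric.isOpen_ball).eqOn_zero_of_preconnected_of_frequently_eq_zero
      (convex_ball (0:ℂ) (1/2)).isPreconnected hhalf hfreq
    intro x hx
    exact this hx
  -- Step B: vanishing for complex x and y
  have stepB : ∀ x ∈ Metric.ball (0:ℂ) (1/2), ∀ y ∈ Metric.ball (0:ℂ) (1/2),
      P (x + I*y) (x - I*y) = 0 := by
    intro x hx
    have hdiff : DifferentiableOn ℂ (fun y => P (x + I*y) (x - I*y))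
        (Metric.ball (0:ℂ) (1/2)) := by
      apply hcomp
      · exact (differentiable_id.const_mul I).const_add x
      · exact differentiable_const x |>.sub (differentiable_id.const_mul I)
      · exact fun y hy => (hmem x y hx hy).1
      · exact fun y hy => (hmem x y hx hy).2
    have hzeros : ∀ t : ℝ, |t| < 1/2 → (fun y => P (x + I*y) (x - I*y)) ((t:ℂ)) = 0 := by
      intro t ht
      exact stepA t ht x hx
    have hfreq := freq_zeros (fun y => P (x + I*y) (x - I*y)) hzeros
    have := (hdiff.analyticOnNhd Metric.isOpen_ball).eqOn_zero_of_preconnected_of_frequently_eq_zero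
      (convex_ball (0:ℂ) (1/2)).isPreconnected hhalf hfreq
    intro y hy
    exact this hy
  -- conclude: P z 0 = 0 for z in the unit ball
  have hP0 : ∀ z ∈ Metric.ball (0:ℂ) 1,
      deriv ωF z * (starRingEnd ℂ) (deriv ωF 0) =
      deriv ωf z * (starRingEnd ℂ) (deriv ωf 0) := by
    intro z hz
    rw [mem_ball_zero_iff] at hz
    have hn2 : ‖(2:ℂ)‖ = 2 := by
      exact Complex.norm_two
    have hxmem : z/2 ∈ Metric.ball (0:ℂ) (1/2) := by
      rw [mem_ball_zero_iff, norm_div, hn2]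
      linarith
    have hymem : -(I*z)/2 ∈ Metric.ball (0:ℂ) (1/2) := by
      rw [mem_ball_zero_iff, norm_div, hn2, norm_neg, norm_mul,
        Complex.norm_I, one_mul]
      linarith
    have h := stepB (z/2) hxmem (-(I*z)/2) hymem
    have e1 : z/2 + I*(-(I*z)/2) = z := by
      have : I*I = -1 := Complex.I_mul_I
      linear_combination (-(z/2)) * this
    have e2 : z/2 - I*(-(I*z)/2) = 0 := by
      have : I*I = -1 := Complex.I_mul_I
      linear_combination (z/2) * this
    rw [e1, e2] at h
    simp only [hPdef, map_zero, h0f, h0F, mul_zero, sub_zero, one_pow, mul_one] at h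
    linear_combination -h
  -- norms of the derivatives at 0 agree
  have hab : ‖deriv ωf 0‖ = ‖deriv ωF 0‖ := by
    have h := heq 0 h0mem
    rw [h0f, h0F] at h
    simp only [norm_zero] at h
    norm_num at h
    exact h
  have hb0 : deriv ωF 0 ≠ 0 := by
    intro hc
    rw [hc, norm_zero] at hab
    exact h'f (norm_eq_zero.mp hab)
  have hcb0 : (starRingEnd ℂ) (deriv ωF 0) ≠ 0 := by
    simpa using hb0
  set lam : ℂ := (starRingEnd ℂ) (deriv ωf 0) / (starRingEnd ℂ) (deriv ωF 0) with hlam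
  have hlamnorm : ‖lam‖ = 1 := by
    rw [hlam, norm_div]
    rw [Complex.norm_conj, Complex.norm_conj]
    rw [hab]
    exact div_self (by simpa [norm_eq_zero] using hb0)
  refine ⟨lam, hlamnorm, ?_⟩
  -- derivative identity
  have hderiv : ∀ z ∈ Metric.ball (0:ℂ) 1, deriv ωF z = lam * deriv ωf z := by
    intro z hz
    have h := hP0 z hz
    rw [hlam]
    field_simp
    linear_combination h
  -- conclude via constancy on the convex ball
  have hdiffh : DifferentiableOn ℂ (fun z => ωF z - lam * ωf z) (Metric.ball (0:ℂ) 1) :=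
    hωF.sub (hωf.const_mul lam)
  have hfd : ∀ z ∈ Metric.ball (0:ℂ) 1,
      fderivWithin ℂ (fun z => ωF z - lam * ωf z) (Metric.ball (0:ℂ) 1) z = 0 := by
    intro z hz
    have h1 : HasDerivAt ωF (deriv ωF z) z :=
      (hωF.differentiableAt (hD.mem_nhds hz)).hasDerivAt
    have h2 : HasDerivAt ωf (deriv ωf z) z :=
      (hωf.differentiableAt (hD.mem_nhds hz)).hasDerivAt
    have h3 : HasDerivAt (fun z => ωF z - lam * ωf z) (deriv ωF z - lam * deriv ωf z) z :=
      h1.sub ((h2.const_mul lam))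
    rw [hderiv z hz] at h3
    simp only [sub_self] at h3
    have h5 : (ContinuousLinearMap.smulRight (1 : ℂ →L[ℂ] ℂ) (0:ℂ)) = 0 := by
      ext
      simp
    have h4 : HasFDerivAt (fun z => ωF z - lam * ωf z) (0 : ℂ →L[ℂ] ℂ) z := h5 ▸ h3.hasFDerivAt
    exact h4.hasFDerivWithinAt.fderivWithin (hD.uniqueDiffOn z hz)
  intro z hz
  have hconst := (convex_ball (0:ℂ) 1).is_const_of_fderivWithin_eq_zero hdiffh hfd hz h0mem
  rw [h0f, h0F] at hconst
  simp only [mul_zero, sub_zero] at hconst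
  linear_combination hconst
end

section
/- If f = h·conj(g) is a nonvanishing logharmonic sense-preserving mapping, then F = log f = log h + conj(log g) is a sense-preserving harmonic mapping (on a simply connected domain, using branches of log h, log g), its second complex dilatation equals the dilatation ω of f, and its harmonic pre-Schwarzian satisfies P_F = P_f − (1 + ω)·h'/h. -/
open Complex

/-- Pre-Schwarzian derivative of the harmonic mapping H + conj G
(with dilatation ω = G'/H'). -/
noncomputable def preSchHarm (H G : ℂ → ℂ) (z : ℂ) : ℂ :=
  deriv (deriv H) z / deriv H z -
    deriv (fun w => deriv G w / deriv H w) z *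
      (starRingEnd ℂ) (deriv G z / deriv H z) /
      (1 - (‖deriv G z / deriv H z‖ : ℂ) ^ 2)

theorem log_of_logharmonic_is_harmonic
    (Ω : Set ℂ) (hΩ : IsOpen Ω) (hconn : IsPreconnected Ω)
    (hsc : SimplyConnectedSpace Ω)
    (h g : ℂ → ℂ)
    (hh : DifferentiableOn ℂ h Ω) (hg : DifferentiableOn ℂ g Ω)
    (hh0 : ∀ z ∈ Ω, h z ≠ 0) (hg0 : ∀ z ∈ Ω, g z ≠ 0)
    (hh' : ∀ z ∈ Ω, deriv h z ≠ 0)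
    (hω : ∀ z ∈ Ω, ‖omegaOf h g z‖ < 1)
    (Lh Lg : ℂ → ℂ)
    (hLh : DifferentiableOn ℂ Lh Ω) (hLg : DifferentiableOn ℂ Lg Ω)
    (hLhlog : ∀ z ∈ Ω, Complex.exp (Lh z) = h z)
    (hLglog : ∀ z ∈ Ω, Complex.exp (Lg z) = g z) :
    ∀ z ∈ Ω,
      deriv Lg z / deriv Lh z = omegaOf h g z ∧
      ‖deriv Lg z / deriv Lh z‖ < 1 ∧
      preSchHarm Lh Lg z =
        preSch h g z - (1 + omegaOf h g z) * (deriv h z / h z) := by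

  -- derivative of the log-branches
  have hhd : ∀ z ∈ Ω, deriv h z = h z * deriv Lh z := by
    intro z hz
    have hLd : DifferentiableAt ℂ Lh z := hLh.differentiableAt (hΩ.mem_nhds hz)
    have h1 : HasDerivAt (fun w => Complex.exp (Lh w))
        (Complex.exp (Lh z) * deriv Lh z) z := hLd.hasDerivAt.cexp
    have h2 : HasDerivAt h (Complex.exp (Lh z) * deriv Lh z) z := by
      apply h1.congr_of_eventuallyEq
      filter_upwards [hΩ.mem_nhds hz] with w hw
      exact (hLhlog w hw).symm
    rw [h2.deriv, hLhlog z hz]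
  have hgd : ∀ z ∈ Ω, deriv g z = g z * deriv Lg z := by
    intro z hz
    have hLd : DifferentiableAt ℂ Lg z := hLg.differentiableAt (hΩ.mem_nhds hz)
    have h1 : HasDerivAt (fun w => Complex.exp (Lg w))
        (Complex.exp (Lg z) * deriv Lg z) z := hLd.hasDerivAt.cexp
    have h2 : HasDerivAt g (Complex.exp (Lg z) * deriv Lg z) z := by
      apply h1.congr_of_eventuallyEq
      filter_upwards [hΩ.mem_nhds hz] with w hw
      exact (hLglog w hw).symm
    rw [h2.deriv, hLglog z hz]
  have hLh' : ∀ z ∈ Ω, deriv Lh z = deriv h z / h z := by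
    intro z hz
    rw [hhd z hz, mul_div_cancel_left₀ _ (hh0 z hz)]
  have hLg' : ∀ z ∈ Ω, deriv Lg z = deriv g z / g z := by
    intro z hz
    rw [hgd z hz, mul_div_cancel_left₀ _ (hg0 z hz)]
  have omegaEq : ∀ z ∈ Ω, deriv Lg z / deriv Lh z = omegaOf h g z := by
    intro z hz
    rw [hLh' z hz, hLg' z hz, omegaOf]
    field_simp [hh0 z hz, hg0 z hz, hh' z hz]
  intro z hz
  refine ⟨omegaEq z hz, by rw [omegaEq z hz]; exact hω z hz, ?_⟩
  -- second derivative of Lh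
  have hd2 : DifferentiableAt ℂ (deriv h) z :=
    (((hh.analyticOnNhd hΩ).deriv z hz).differentiableAt)
  have hLh2 : deriv (deriv Lh) z = deriv (fun w => deriv h w / h w) z := by
    apply Filter.EventuallyEq.deriv_eq
    filter_upwards [hΩ.mem_nhds hz] with w hw
    exact hLh' w hw
  have hquot : deriv (fun w => deriv h w / h w) z =
      (deriv (deriv h) z * h z - deriv h z * deriv h z) / h z ^ 2 :=
    deriv_div hd2 (hh.differentiableAt (hΩ.mem_nhds hz)) (hh0 z hz)
  have homder : deriv (fun w => deriv Lg w / deriv Lh w) z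
      = deriv (omegaOf h g) z := by
    apply Filter.EventuallyEq.deriv_eq
    filter_upwards [hΩ.mem_nhds hz] with w hw
    exact omegaEq w hw
  have hE : (deriv (deriv h) z * h z - deriv h z * deriv h z) / h z ^ 2
      / (deriv h z / h z)
      = deriv (deriv h) z / deriv h z - deriv h z / h z := by
    field_simp [hh0 z hz, hh' z hz]
  simp only [preSchHarm, preSch]
  rw [omegaEq z hz, homder, hLh2, hquot, hLh' z hz]
  linear_combination hE
end
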